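/- Suppose (U^n) solves the implicit upwind scheme for linear advection with λ > 0, and let η : ℝ → ℝ be convex and nonnegative. Fix n ∈ ℕ and assume that for each 0 ≤ k ≤ n+1 the sequence j ↦ η(U^k_j) is summable over ℤ. Then Σ_{j∈ℤ} η(U^{n+1}_j) ≤ Σ_{k=0}^{n} c^{n+1}_k Σ_{j∈ℤ} η(U^k_j). -/

import Mathlib

open scoped BigOperators

/-- The L1 coefficients `c^{n+1}_k` for the discrete Caputo derivative:
`c^{n+1}_0 = (n+1)^{1-α} - n^{1-α}` and, for `1 ≤ k ≤ n`,
`c^{n+1}_k = 2(n+1-k)^{1-α} - (n+2-k)^{1-α} - (n-k)^{1-α}`. -/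
noncomputable def caputoCoeff (α : ℝ) (n k : ℕ) : ℝ :=
  if k = 0 then ((n : ℝ) + 1) ^ (1 - α) - (n : ℝ) ^ (1 - α)
  else 2 * ((n : ℝ) + 1 - (k : ℝ)) ^ (1 - α) - ((n : ℝ) + 2 - (k : ℝ)) ^ (1 - α)
    - ((n : ℝ) - (k : ℝ)) ^ (1 - α)

/-- `U` solves the implicit upwind scheme for the linear advection equation
with flux `f(u) = a u`, `a > 0`, where `lam = a τ^α / (h Γ(2-α))`. -/
def SolvesImplicitAdvection (α lam : ℝ) (U : ℕ → ℤ → ℝ) : Prop :=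
  ∀ (n : ℕ) (j : ℤ),
    U (n + 1) j = (∑ k ∈ Finset.range (n + 1), caputoCoeff α n k * U k j)
      - lam * (U (n + 1) j - U (n + 1) (j - 1))

/-- Auxiliary: `gAux α m = (m+1)^{1-α} - m^{1-α}`. -/
noncomputable def gAux (α : ℝ) (m : ℕ) : ℝ :=
  ((m : ℝ) + 1) ^ (1 - α) - (m : ℝ) ^ (1 - α)

lemma caputo_succ (α : ℝ) (n i : ℕ) (hi : i < n) :
    caputoCoeff α n (i + 1) = gAux α (n - (i + 1)) - gAux α (n - i) := by
  have h1 : ((n - (i + 1) : ℕ) : ℝ) = (n : ℝ) - (i : ℝ) - 1 := by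
    rw [Nat.cast_sub (by omega)]; push_cast; ring
  have h2 : ((n - i : ℕ) : ℝ) = (n : ℝ) - (i : ℝ) := by
    rw [Nat.cast_sub (by omega)]
  simp only [caputoCoeff, gAux, if_neg (Nat.succ_ne_zero i), h1, h2]
  push_cast
  rw [show (n : ℝ) + 1 - ((i : ℝ) + 1) = (n : ℝ) - (i : ℝ) from by ring,
    show (n : ℝ) + 2 - ((i : ℝ) + 1) = (n : ℝ) - (i : ℝ) + 1 from by ring,
    show (n : ℝ) - ((i : ℝ) + 1) = (n : ℝ) - (i : ℝ) - 1 from by ring,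
    show (n : ℝ) - (i : ℝ) - 1 + 1 = (n : ℝ) - (i : ℝ) from by ring]
  ring

lemma caputo_sum (α : ℝ) (hα : α ∈ Set.Ioo (0 : ℝ) 1) (n : ℕ) :
    ∑ k ∈ Finset.range (n + 1), caputoCoeff α n k = 1 := by
  obtain ⟨hα0, hα1⟩ := hα
  have hg0 : gAux α 0 = 1 := by
    simp [gAux, Real.zero_rpow (by linarith : (1 : ℝ) - α ≠ 0)]
  have hc0 : caputoCoeff α n 0 = gAux α n := by simp [caputoCoeff, gAux]
  rw [Finset.sum_range_succ']
  have htel : ∑ i ∈ Finset.range n, caputoCoeff α n (i + 1)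
      = gAux α 0 - gAux α n := by
    calc ∑ i ∈ Finset.range n, caputoCoeff α n (i + 1)
        = ∑ i ∈ Finset.range n, (gAux α (n - (i + 1)) - gAux α (n - i)) :=
          Finset.sum_congr rfl fun i hi =>
            caputo_succ α n i (Finset.mem_range.mp hi)
      _ = gAux α (n - n) - gAux α (n - 0) := by
          exact Finset.sum_range_sub (fun i => gAux α (n - i)) n
      _ = gAux α 0 - gAux α n := by simp
  rw [htel, hc0, hg0]; ring

lemma caputo_nonneg (α : ℝ) (hα : α ∈ Set.Ioo (0 : ℝ) 1) (n k : ℕ) (hk : k ≤ n) :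
    0 ≤ caputoCoeff α n k := by
  obtain ⟨hα0, hα1⟩ := hα
  have hβ0 : (0 : ℝ) ≤ 1 - α := by linarith
  have hβ1 : (1 : ℝ) - α ≤ 1 := by linarith
  rcases Nat.eq_zero_or_pos k with rfl | hk1
  · unfold caputoCoeff
    rw [if_pos rfl, sub_nonneg]
    exact Real.rpow_le_rpow (Nat.cast_nonneg n) (by linarith : (n:ℝ) ≤ (n:ℝ) + 1) hβ0
  · have hkn : (k : ℝ) ≤ (n : ℝ) := Nat.cast_le.mpr hk
    have hx1 : (1 : ℝ) ≤ (n : ℝ) + 1 - (k : ℝ) := by linarith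
    set x : ℝ := (n : ℝ) + 1 - (k : ℝ) with hx
    have hcc := (Real.concaveOn_rpow hβ0 hβ1).2
      (show x - 1 ∈ Set.Ici (0 : ℝ) from by simp; linarith)
      (show x + 1 ∈ Set.Ici (0 : ℝ) from by simp; linarith)
      (by norm_num : (0 : ℝ) ≤ 1 / 2) (by norm_num : (0 : ℝ) ≤ 1 / 2)
      (by norm_num : (1 : ℝ) / 2 + 1 / 2 = 1)
    have hmid : (1 / 2 : ℝ) • (x - 1) + (1 / 2 : ℝ) • (x + 1) = x := by
      simp [smul_eq_mul]; ring
    rw [hmid] at hcc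
    simp only [smul_eq_mul] at hcc
    have hne : k ≠ 0 := by omega
    simp only [caputoCoeff, if_neg hne]
    rw [show (n : ℝ) + 2 - (k : ℝ) = x + 1 from by rw [hx]; ring,
      show (n : ℝ) - (k : ℝ) = x - 1 from by rw [hx]; ring,
      show (n : ℝ) + 1 - (k : ℝ) = x from rfl]
    linarith

/-- one-step entropy estimate for the implicit upwind scheme for linear
advection: for convex nonnegative `η`,
`Σ_j η(U^{n+1}_j) ≤ Σ_{k=0}^n c^{n+1}_k Σ_j η(U^k_j)`. -/
theorem implicit_advection_entropy_step (α τ h a : ℝ)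
    (hα : α ∈ Set.Ioo (0 : ℝ) 1) (hτ : 0 < τ) (hh : 0 < h) (ha : 0 < a)
    (lam : ℝ) (hlam : lam = a * τ ^ α / (h * Real.Gamma (2 - α)))
    (U : ℕ → ℤ → ℝ) (hU : SolvesImplicitAdvection α lam U)
    (η : ℝ → ℝ) (hη : ConvexOn ℝ Set.univ η) (hη0 : ∀ x, 0 ≤ η x)
    (n : ℕ) (hsum : ∀ k ≤ n + 1, Summable (fun j : ℤ => η (U k j))) :
    ∑' j : ℤ, η (U (n + 1) j)
      ≤ ∑ k ∈ Finset.range (n + 1), caputoCoeff α n k * ∑' j : ℤ, η (U k j) := by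
  obtain ⟨hα0, hα1⟩ := hα
  have hΓ : 0 < Real.Gamma (2 - α) := Real.Gamma_pos_of_pos (by linarith)
  have hlam0 : 0 < lam := by
    rw [hlam]
    have hτα : 0 < τ ^ α := Real.rpow_pos_of_pos hτ α
    positivity
  have h1l : 0 < 1 + lam := by linarith
  set μ : ℝ := 1 / (1 + lam) with hμ
  set ν : ℝ := lam / (1 + lam) with hν
  have hμ0 : 0 < μ := by positivity
  have hν0 : 0 ≤ ν := by positivity
  have hμν : μ + ν = 1 := by rw [hμ, hν]; field_simp
  -- pointwise convex combination
  have hcomb : ∀ j : ℤ, U (n + 1) j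
      = μ * (∑ k ∈ Finset.range (n + 1), caputoCoeff α n k * U k j)
        + ν * U (n + 1) (j - 1) := by
    intro j
    have := hU n j
    rw [hμ, hν]
    field_simp
    linarith [this]
  have hcnn : ∀ k ∈ Finset.range (n + 1), 0 ≤ caputoCoeff α n k := fun k hk =>
    caputo_nonneg α ⟨hα0, hα1⟩ n k (by
      have := Finset.mem_range.mp hk; omega)
  have hcsum : ∑ k ∈ Finset.range (n + 1), caputoCoeff α n k = 1 :=
    caputo_sum α ⟨hα0, hα1⟩ n
  -- pointwise Jensen
  have hpt : ∀ j : ℤ, η (U (n + 1) j)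
      ≤ μ * (∑ k ∈ Finset.range (n + 1), caputoCoeff α n k * η (U k j))
        + ν * η (U (n + 1) (j - 1)) := by
    intro j
    have hjensen : η (∑ k ∈ Finset.range (n + 1), caputoCoeff α n k * U k j)
        ≤ ∑ k ∈ Finset.range (n + 1), caputoCoeff α n k * η (U k j) := by
      have := hη.map_sum_le (t := Finset.range (n + 1))
        (w := fun k => caputoCoeff α n k) (p := fun k => U k j)
        hcnn hcsum (fun i _ => Set.mem_univ _)
      simpa [smul_eq_mul] using this
    have h2 := hη.2 (Set.mem_univ
        (∑ k ∈ Finset.range (n + 1), caputoCoeff α n k * U k j))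
      (Set.mem_univ (U (n + 1) (j - 1))) hμ0.le hν0 hμν
    simp only [smul_eq_mul] at h2
    rw [hcomb j]
    calc η (μ * (∑ k ∈ Finset.range (n + 1), caputoCoeff α n k * U k j)
          + ν * U (n + 1) (j - 1))
        ≤ μ * η (∑ k ∈ Finset.range (n + 1), caputoCoeff α n k * U k j)
          + ν * η (U (n + 1) (j - 1)) := h2
      _ ≤ μ * (∑ k ∈ Finset.range (n + 1), caputoCoeff α n k * η (U k j))
          + ν * η (U (n + 1) (j - 1)) := by
          have := mul_le_mul_of_nonneg_left hjensen hμ0.le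
          linarith
  -- summability facts
  have hSnew : Summable (fun j : ℤ => η (U (n + 1) j)) := hsum (n + 1) le_rfl
  have hshift : Summable (fun j : ℤ => η (U (n + 1) (j - 1))) :=
    (Equiv.subRight (1 : ℤ)).summable_iff.mpr hSnew
  have hinner : Summable (fun j : ℤ =>
      ∑ k ∈ Finset.range (n + 1), caputoCoeff α n k * η (U k j)) :=
    summable_sum fun k hk =>
      ((hsum k (by have := Finset.mem_range.mp hk; omega)).mul_left _)
  have hRHS : Summable (fun j : ℤ =>
      μ * (∑ k ∈ Finset.range (n + 1), caputoCoeff α n k * η (U k j))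
        + ν * η (U (n + 1) (j - 1))) :=
    (hinner.mul_left μ).add (hshift.mul_left ν)
  -- sum the pointwise estimate
  have hmain : ∑' j : ℤ, η (U (n + 1) j)
      ≤ ∑' j : ℤ, (μ * (∑ k ∈ Finset.range (n + 1), caputoCoeff α n k * η (U k j))
          + ν * η (U (n + 1) (j - 1))) :=
    Summable.tsum_le_tsum hpt hSnew hRHS
  have hsplit : ∑' j : ℤ, (μ * (∑ k ∈ Finset.range (n + 1),
        caputoCoeff α n k * η (U k j)) + ν * η (U (n + 1) (j - 1)))
      = μ * (∑ k ∈ Finset.range (n + 1), caputoCoeff α n k * ∑' j : ℤ, η (U k j))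
        + ν * ∑' j : ℤ, η (U (n + 1) j) := by
    rw [Summable.tsum_add (hinner.mul_left μ) (hshift.mul_left ν), tsum_mul_left,
      tsum_mul_left]
    congr 1
    · congr 1
      rw [Summable.tsum_finsetSum fun k hk =>
        ((hsum k (by have := Finset.mem_range.mp hk; omega)).mul_left _)]
      exact Finset.sum_congr rfl fun k _ => tsum_mul_left
    · congr 1
      exact (Equiv.subRight (1 : ℤ)).tsum_eq fun j => η (U (n + 1) j)
  rw [hsplit] at hmain
  set S := ∑' j : ℤ, η (U (n + 1) j)
  set T := ∑ k ∈ Finset.range (n + 1), caputoCoeff α n k * ∑' j : ℤ, η (U k j)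
  have hfin : μ * S ≤ μ * T := by
    have : S * (1 - ν) ≤ μ * T := by linarith
    have h1ν : 1 - ν = μ := by linarith
    rw [h1ν] at this; linarith
  exact le_of_mul_le_mul_left hfin hμ0
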